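/- For polynomials p, q in ℤ[x_1, …, x_m], the Newton polytope of the product pq equals the Minkowski sum of the Newton polytopes of p and q: N(pq) = N(p) + N(q). -/

import Mathlib

open Pointwise

/-- The Newton polytope of `p ∈ ℤ[x_1,…,x_m]`: the convex hull in `ℝ^m` of the exponent
vectors of the monomials appearing in `p`. -/
noncomputable def newtonPolytope {m : ℕ} (p : MvPolynomial (Fin m) ℤ) : Set (Fin m → ℝ) :=
  convexHull ℝ ((fun d : Fin m →₀ ℕ => fun i => (d i : ℝ)) '' (p.support : Set (Fin m →₀ ℕ)))

/-- The exponent-vector map as an additive monoid hom. -/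
noncomputable def expAddHom (m : ℕ) : (Fin m →₀ ℕ) →+ (Fin m → ℝ) where
  toFun d := fun i => (d i : ℝ)
  map_zero' := by ext i; simp
  map_add' a b := by ext i; simp

lemma expAddHom_inj (m : ℕ) : Function.Injective (expAddHom m) := by
  intro a b h
  ext i
  have := congrFun h i
  simpa [expAddHom] using this

lemma support_mul_mem {m : ℕ} (p q : MvPolynomial (Fin m) ℤ) (a b : Fin m →₀ ℕ)
    (ha : a ∈ p.support) (hb : b ∈ q.support)
    (key : ∀ a' ∈ p.support, ∀ b' ∈ q.support, a' + b' = a + b → a' = a ∧ b' = b) :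
    a + b ∈ (p * q).support := by
  rw [MvPolynomial.mem_support_iff, MvPolynomial.coeff_mul]
  rw [Finset.sum_eq_single_of_mem (a, b) (Finset.HasAntidiagonal.mem_antidiagonal.2 rfl)]
  · exact mul_ne_zero (MvPolynomial.mem_support_iff.1 ha) (MvPolynomial.mem_support_iff.1 hb)
  · intro x hx hne
    rw [Finset.HasAntidiagonal.mem_antidiagonal] at hx
    by_contra hc
    obtain ⟨h1, h2⟩ := mul_ne_zero_iff.1 hc
    obtain ⟨e1, e2⟩ := key x.1 (MvPolynomial.mem_support_iff.2 h1)
      x.2 (MvPolynomial.mem_support_iff.2 h2) hx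
    exact hne (Prod.ext e1 e2)

/-- For nonzero polynomials `p, q ∈ ℤ[x_1,…,x_m]`, the Newton polytope of the product is the
Minkowski sum of the Newton polytopes: `N(pq) = N(p) + N(q)`. -/
theorem stmt2 {m : ℕ} (p q : MvPolynomial (Fin m) ℤ) (hp : p ≠ 0) (hq : q ≠ 0) :
    newtonPolytope (p * q) = newtonPolytope p + newtonPolytope q := by
  set e := expAddHom m with he
  have hN : ∀ r : MvPolynomial (Fin m) ℤ,
      newtonPolytope r = convexHull ℝ (e '' (r.support : Set (Fin m →₀ ℕ))) := fun r => rfl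
  set A : Set (Fin m → ℝ) := e '' (p.support : Set (Fin m →₀ ℕ)) with hA
  set B : Set (Fin m → ℝ) := e '' (q.support : Set (Fin m →₀ ℕ)) with hB
  have hAB : newtonPolytope p + newtonPolytope q = convexHull ℝ (A + B) := by
    rw [hN p, hN q, convexHull_add]
  apply Set.Subset.antisymm
  · -- easy direction
    rw [hAB, hN]
    apply convexHull_mono
    intro v hv
    obtain ⟨d, hd, rfl⟩ := hv
    have hd' := MvPolynomial.support_mul p q hd
    rw [Finset.mem_add] at hd'
    obtain ⟨a, ha, b, hb, rfl⟩ := hd'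
    exact ⟨e a, ⟨a, ha, rfl⟩, e b, ⟨b, hb, rfl⟩, (map_add e a b).symm⟩
  · -- hard direction
    have hfinS : (A + B).Finite :=
      Set.Finite.add (p.support.finite_toSet.image _) (q.support.finite_toSet.image _)
    have hcomp : IsCompact (convexHull ℝ (A + B)) := hfinS.isCompact_convexHull ℝ
    have hKM : closure (convexHull ℝ ((convexHull ℝ (A + B)).extremePoints ℝ))
        = convexHull ℝ (A + B) :=
      closure_convexHull_extremePoints hcomp (convex_convexHull ℝ _)
    have hext : (convexHull ℝ (A + B)).extremePoints ℝ
        ⊆ e '' (((p * q).support : Set (Fin m →₀ ℕ))) := by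
      intro v hv
      have hvS : v ∈ A + B := extremePoints_convexHull_subset hv
      obtain ⟨x, ⟨a, ha, rfl⟩, y, ⟨b, hb, rfl⟩, rfl⟩ := hvS
      have ha' : a ∈ p.support := ha
      have hb' : b ∈ q.support := hb
      refine ⟨a + b, ?_, map_add e a b⟩
      have key : ∀ a' ∈ p.support, ∀ b' ∈ q.support, a' + b' = a + b → a' = a ∧ b' = b := by
        intro a' ha2 b' hb2 hab
        have h2 : e a' + e b' = e a + e b := by rw [← map_add, ← map_add, hab]
        have hx1 : e a + e b' ∈ convexHull ℝ (A + B) :=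
          subset_convexHull ℝ _ ⟨e a, ⟨a, ha', rfl⟩, e b', ⟨b', hb2, rfl⟩, rfl⟩
        have hx2 : e a' + e b ∈ convexHull ℝ (A + B) :=
          subset_convexHull ℝ _ ⟨e a', ⟨a', ha2, rfl⟩, e b, ⟨b, hb', rfl⟩, rfl⟩
        have hxy : e a + e b' = e a' + e b := by
          by_contra hne
          have hmem : e a + e b ∈ openSegment ℝ (e a + e b') (e a' + e b) := by
            refine ⟨1/2, 1/2, by norm_num, by norm_num, by norm_num, ?_⟩
            have h5 : (e a + e b') + (e a' + e b) = (e a + e b) + (e a + e b) := by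
              linear_combination (norm := module) h2
            linear_combination (norm := module) (1/2 : ℝ) • h5
          obtain ⟨h3, h4⟩ := (mem_extremePoints.1 hv).2 _ hx1 _ hx2 hmem
          exact hne (h3.trans h4.symm)
        have hea : e a' = e a := by linear_combination (norm := module) (1/2 : ℝ) • h2 - (1/2 : ℝ) • hxy
        have haa : a' = a := expAddHom_inj m hea
        refine ⟨haa, ?_⟩
        subst haa
        exact add_left_cancel hab
      exact Finset.mem_coe.2 (support_mul_mem p q a b ha' hb' key)
    calc newtonPolytope p + newtonPolytope q = convexHull ℝ (A + B) := hAB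
      _ = closure (convexHull ℝ ((convexHull ℝ (A + B)).extremePoints ℝ)) := hKM.symm
      _ ⊆ closure (convexHull ℝ (e '' (((p * q).support : Set (Fin m →₀ ℕ))))) :=
          closure_mono (convexHull_mono hext)
      _ = convexHull ℝ (e '' (((p * q).support : Set (Fin m →₀ ℕ)))) :=
          (((p * q).support.finite_toSet.image _).isClosed_convexHull ℝ).closure_eq
      _ = newtonPolytope (p * q) := (hN _).symm
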